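/- Let m_1 ≥ m_2 ≥ … ≥ m_s ≥ 0 be integers with m_1 + m_2 ≥ n, let τ = max{ i : m_1 + m_i ≥ n } and v = Σ_{i=2}^{τ} (m_1 + m_i − n + 1). If 2m_1 − n + 2 ≤ v ≤ m_1 and τ ≥ 4, then there exist subspaces W_1, …, W_s of ℂ^{n+1} with dim W_i = m_i + 1 such that Q(W_1,…,W_s) = {0}; that is, for a generic configuration of linear spaces Λ of weight vector (m_1,…,m_s) in P^n one has dim (I_Λ)_2 = 0. -/

import Mathlib

open Finset Submodule Module QuadraticMap

noncomputable section Stmt6Aux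

private def blk (N l u : ℕ) : Finset (Fin N) :=
  (Finset.Ico l (min u N)).attachFin fun m hm =>
    lt_of_lt_of_le (Finset.mem_Ico.mp hm).2 (min_le_right u N)

private lemma mem_blk {N l u : ℕ} {p : Fin N} :
    p ∈ blk N l u ↔ l ≤ (p : ℕ) ∧ (p : ℕ) < u := by
  have hpN := p.isLt
  simp only [blk, Finset.mem_attachFin, Finset.mem_Ico, lt_min_iff]
  omega

private lemma card_blk {N l u : ℕ} (h : u ≤ N) : (blk N l u).card = u - l := by
  rw [blk, Finset.card_attachFin, Nat.card_Ico, min_eq_left h]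

private def EE (N : ℕ) (p : ℕ) : Fin N → ℂ :=
  if h : p < N then Pi.single (⟨p, h⟩ : Fin N) 1 else 0

private lemma EE_apply {N p : ℕ} (h : p < N) (j : Fin N) :
    EE N p j = if (j : ℕ) = p then 1 else 0 := by
  classical
  rw [EE, dif_pos h, Pi.single_apply]
  simp [Fin.ext_iff]

private lemma EE_coe {N : ℕ} (p : Fin N) : EE N ↑p = Pi.single p 1 := by
  rw [EE, dif_pos p.isLt]

private def GG (N t w sh : ℕ) (p : Fin N) : Fin N → ℂ :=
  EE N ↑p + if t ≤ (p : ℕ) ∧ (p : ℕ) < t + w then EE N ((p : ℕ) - sh) else 0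

private lemma GG_apply {N t w sh : ℕ} (p j : Fin N) :
    GG N t w sh p j = EE N ↑p j + if t ≤ (p : ℕ) ∧ (p : ℕ) < t + w then EE N ((p : ℕ) - sh) j else 0 := by
  rw [GG]
  by_cases h : t ≤ (p : ℕ) ∧ (p : ℕ) < t + w
  · rw [if_pos h, if_pos h]; rfl
  · rw [if_neg h, if_neg h]; simp

private lemma GG_eq_of_pos {N t w sh : ℕ} {p : Fin N} (h : t ≤ (p : ℕ) ∧ (p : ℕ) < t + w) :
    GG N t w sh p = EE N ↑p + EE N ((p : ℕ) - sh) := by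
  rw [GG, if_pos h]

private lemma GG_eq_of_neg {N t w sh : ℕ} {p : Fin N} (h : ¬(t ≤ (p : ℕ) ∧ (p : ℕ) < t + w)) :
    GG N t w sh p = EE N ↑p := by
  rw [GG, if_neg h, add_zero]

private lemma span_delta_finrank {N : ℕ} (S : Finset (Fin N)) (f : Fin N → (Fin N → ℂ))
    (hf : ∀ j ∈ S, ∀ j' ∈ S, f j j' = if (j' : ℕ) = (j : ℕ) then 1 else 0) :
    Module.finrank ℂ (Submodule.span ℂ (f '' (S : Set (Fin N)))) = S.card := by
  classical
  have hli : LinearIndependent ℂ fun j : {x // x ∈ S} => f j.1 := by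
    apply LinearIndependent.of_comp (LinearMap.funLeft ℂ ℂ (Subtype.val : {x // x ∈ S} → Fin N))
    have hcomp : (LinearMap.funLeft ℂ ℂ (Subtype.val : {x // x ∈ S} → Fin N)) ∘
        (fun j : {x // x ∈ S} => f j.1) = fun j : {x // x ∈ S} => Pi.single j (1 : ℂ) := by
      funext j
      funext j'
      simp only [Function.comp_apply, LinearMap.funLeft_apply, hf j.1 j.2 j'.1 j'.2,
        Pi.single_apply]
      by_cases h : j' = j
      · subst h; simp
      · rw [if_neg (fun hh => h (Subtype.ext (Fin.ext hh))), if_neg h]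
    rw [hcomp]
    have hb : ⇑(Pi.basisFun ℂ {x // x ∈ S}) = fun j : {x // x ∈ S} => Pi.single j (1 : ℂ) := by
      funext j; exact Pi.basisFun_apply ℂ _ j
    rw [← hb]
    exact (Pi.basisFun ℂ _).linearIndependent
  have hr : Set.range (fun j : {x // x ∈ S} => f j.1) = f '' (S : Set (Fin N)) := by
    rw [show (fun j : {x // x ∈ S} => f j.1) = f ∘ Subtype.val from rfl, Set.range_comp,
      Subtype.range_coe]
  rw [← hr, finrank_span_eq_card hli, Fintype.card_coe]

private lemma Mzero (a b : ℕ) (hab : a + 1 ≤ b) (M : ℕ → ℕ → ℂ)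
    (C3 : ∀ k < b, ∀ l < b, (if l < a then M l k else 0) + (if k < a then M k l else 0) = 0)
    (C4 : ∀ k < b, ∀ l < b, (if 1 ≤ l ∧ l ≤ a then M (l-1) k else 0)
        + (if 1 ≤ k ∧ k ≤ a then M (k-1) l else 0) = 0) :
    ∀ i < a, ∀ j < b, M i j = 0 := by
  intro i
  induction i using Nat.strong_induction_on with
  | _ i IH =>
    intro hia j hjb
    by_cases hj : j < a
    · have h3 := C3 i (by omega) j (by omega)
      rw [if_pos hj, if_pos hia] at h3
      rcases Nat.eq_zero_or_pos i with hi0 | hi1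
      · subst hi0
        have h4 := C4 (j+1) (by omega) 0 (by omega)
        rw [if_neg (by omega), if_pos (by omega)] at h4
        simp only [Nat.add_sub_cancel, zero_add] at h4
        rw [h4, zero_add] at h3
        exact h3
      · have h4 := C4 (j+1) (by omega) i (by omega)
        rw [if_pos (by omega), if_pos (by omega)] at h4
        simp only [Nat.add_sub_cancel] at h4
        have hIH := IH (i-1) (by omega) (by omega) (j+1) (by omega)
        rw [hIH, zero_add] at h4
        rw [h4, zero_add] at h3
        exact h3
    · have h3 := C3 j hjb i (by omega)
      rw [if_pos hia, if_neg hj, add_zero] at h3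
      exact h3

private lemma locate (d : ℕ → ℕ) (τ : ℕ) (hτ2 : 2 ≤ τ) (hmono : ∀ i j, i ≤ j → d i ≤ d j)
    (h1 : d 1 = 0) : ∀ p, p < d τ → ∃ i, 2 ≤ i ∧ i ≤ τ ∧ d (i-1) ≤ p ∧ p < d i := by
  induction τ, hτ2 using Nat.le_induction with
  | base =>
    intro p hp
    exact ⟨2, le_refl _, le_refl _, by simp [h1], hp⟩
  | succ t ht IH =>
    intro p hp
    by_cases h : p < d t
    · obtain ⟨i, h2, h3, h4, h5⟩ := IH p h
      exact ⟨i, h2, by omega, h4, h5⟩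
    · exact ⟨t+1, by omega, le_refl _, by simpa using not_lt.mp h, hp⟩

end Stmt6Aux

/-- Intersecting case (ii)(a): if `2m_1 - n + 2 ≤ v ≤ m_1` and `τ ≥ 4`, a generic
configuration of linear spaces of weight vector `(m_1, …, m_s)` lies on no quadric.
Here `τ = max{ i ≤ s : m_1 + m_i ≥ n }` and `v = Σ_{i=2}^{τ} (m_1 + m_i - n + 1)`.
(`m` is 1-indexed; the inequality `2m_1 - n + 2 ≤ v` is stated additively to avoid
truncated subtraction.) -/
theorem stmt6 (n s : ℕ) (m : ℕ → ℕ) (hs : 2 ≤ s)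
    (hmono : ∀ i j, 1 ≤ i → i ≤ j → j ≤ s → m j ≤ m i)
    (h12 : n ≤ m 1 + m 2)
    (τ v : ℕ)
    (hτ : τ = Nat.findGreatest (fun i => n ≤ m 1 + m i) s)
    (hv : v = ∑ i ∈ Finset.Icc 2 τ, (m 1 + m i + 1 - n))
    (hlow : 2 * m 1 + 2 ≤ v + n) (hhigh : v ≤ m 1)
    (hτ4 : 4 ≤ τ) :
    ∃ W : ℕ → Submodule ℂ (Fin (n + 1) → ℂ),
      (∀ i ∈ Finset.Icc 1 s, Module.finrank ℂ (W i) = m i + 1) ∧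
      ∀ q : QuadraticForm ℂ (Fin (n + 1) → ℂ),
        (∀ i ∈ Finset.Icc 1 s, ∀ x ∈ W i, q x = 0) → q = 0 := by
  classical
  have hτs : τ ≤ s := by rw [hτ]; exact Nat.findGreatest_le s
  have hPτ : n ≤ m 1 + m τ := by
    rw [hτ]; exact Nat.findGreatest_spec (P := fun i => n ≤ m 1 + m i) hs h12
  have hP : ∀ i, 2 ≤ i → i ≤ τ → n ≤ m 1 + m i := by
    intro i h2 hi
    have h := hmono i τ (by omega) hi hτs
    omega
  have hQb : ∀ i, τ < i → i ≤ s → m 1 + m i < n := by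
    intro i h1 h2
    have := Nat.findGreatest_is_greatest (P := fun i => n ≤ m 1 + m i) (n := s) (hτ ▸ h1) h2
    omega
  have hm1n : m 1 + 2 ≤ n := by omega
  obtain ⟨a, ha⟩ : ∃ a, v + a = m 1 + 1 := ⟨m 1 + 1 - v, by omega⟩
  obtain ⟨b, hb⟩ : ∃ b, m 1 + b = n := ⟨n - m 1, by omega⟩
  have ha1 : 1 ≤ a := by omega
  have hab : a + 1 ≤ b := by omega
  have hNvab : n + 1 = v + a + b := by omega
  set d : ℕ → ℕ := fun i => ∑ k ∈ Finset.Icc 2 i, (m 1 + m k + 1 - n) with hd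
  have hd1 : d 1 = 0 := by simp [hd]
  have hdτ : d τ = v := hv.symm
  have hdmono : ∀ i j, i ≤ j → d i ≤ d j := by
    intro i j hij
    exact Finset.sum_le_sum_of_subset (Finset.Icc_subset_Icc_right hij)
  have hdsucc : ∀ i, 2 ≤ i → d (i-1) + (m 1 + m i + 1 - n) = d i := by
    intro i h2
    obtain ⟨j, rfl⟩ : ∃ j, i = j + 1 := ⟨i - 1, by omega⟩
    simp only [hd, Nat.add_sub_cancel]
    rw [Finset.sum_Icc_succ_top (by omega)]
  have hdv : ∀ i, i ≤ τ → d i ≤ v := fun i hi => hdτ ▸ hdmono i τ hi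
  have hci : ∀ i, 2 ≤ i → i ≤ τ → n + (m 1 + m i + 1 - n) = m 1 + m i + 1 := by
    intro i h2 hi; have := hP i h2 hi; omega
  set S : ℕ → Finset (Fin (n+1)) := fun i =>
    if i = 1 then blk (n+1) 0 (v+a)
    else if i ≤ τ then blk (n+1) (d (i-1)) (d i) ∪ blk (n+1) (v+a) (n+1)
    else blk (n+1) (v+a) (v+a+(m i+1)) with hS
  set f : ℕ → Fin (n+1) → (Fin (n+1) → ℂ) := fun i =>
    if i = 3 then GG (n+1) (v+a) a a
    else if i = 4 then GG (n+1) (v+a+1) a (a+1)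
    else fun p : Fin (n+1) => EE (n+1) ↑p with hf
  have hS1 : S 1 = blk (n+1) 0 (v+a) := by simp [hS]
  have hSmid : ∀ i, 2 ≤ i → i ≤ τ →
      S i = blk (n+1) (d (i-1)) (d i) ∪ blk (n+1) (v+a) (n+1) := by
    intro i h2 hi
    simp only [hS]
    rw [if_neg (by omega), if_pos hi]
  have hSgt : ∀ i, τ < i → S i = blk (n+1) (v+a) (v+a+(m i+1)) := by
    intro i h1
    simp only [hS]
    rw [if_neg (by omega), if_neg (by omega)]
  have hfEE : ∀ i, i ≠ 3 → i ≠ 4 → f i = fun p : Fin (n+1) => EE (n+1) ↑p := by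
    intro i h3 h4
    simp only [hf]
    rw [if_neg h3, if_neg h4]
  have hf3 : f 3 = GG (n+1) (v+a) a a := by simp [hf]
  have hf4 : f 4 = GG (n+1) (v+a+1) a (a+1) := by simp [hf]
  refine ⟨fun i => Submodule.span ℂ (f i '' (S i : Set (Fin (n+1)))), ?_, ?_⟩
  · intro i hi
    rw [Finset.mem_Icc] at hi
    have hdelta : ∀ j ∈ S i, ∀ j' ∈ S i, f i j j' = if (j' : ℕ) = (j : ℕ) then 1 else 0 := by
      intro j hj j' hj'
      by_cases h3 : i = 3
      · subst h3
        have hd3v : d 3 ≤ v := hdv 3 (by omega)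
        have hj'S : (j' : ℕ) < d 3 ∨ v + a ≤ (j' : ℕ) := by
          rw [hSmid 3 (by omega) (by omega)] at hj'
          rcases Finset.mem_union.mp hj' with h | h
          · exact Or.inl (mem_blk.mp h).2
          · exact Or.inr (mem_blk.mp h).1
        rw [hf3, GG_apply]
        by_cases hcond : v + a ≤ (j : ℕ) ∧ (j : ℕ) < v + a + a
        · rw [if_pos hcond, EE_apply (show (j:ℕ) - a < n+1 by omega), if_neg (by omega),
            add_zero, EE_apply j.isLt]
        · rw [if_neg hcond, add_zero, EE_apply j.isLt]
      · by_cases h4 : i = 4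
        · subst h4
          have hd4v : d 4 ≤ v := hdv 4 (by omega)
          have hj'S : (j' : ℕ) < d 4 ∨ v + a ≤ (j' : ℕ) := by
            rw [hSmid 4 (by omega) (by omega)] at hj'
            rcases Finset.mem_union.mp hj' with h | h
            · exact Or.inl (mem_blk.mp h).2
            · exact Or.inr (mem_blk.mp h).1
          rw [hf4, GG_apply]
          by_cases hcond : v + a + 1 ≤ (j : ℕ) ∧ (j : ℕ) < v + a + 1 + a
          · rw [if_pos hcond, EE_apply (show (j:ℕ) - (a+1) < n+1 by omega), if_neg (by omega),
              add_zero, EE_apply j.isLt]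
          · rw [if_neg hcond, add_zero, EE_apply j.isLt]
        · rw [hfEE i h3 h4]
          exact EE_apply j.isLt j'
    rw [span_delta_finrank (S i) (f i) hdelta]
    rcases Nat.lt_or_ge i 2 with h2 | h2
    · have hone : i = 1 := by omega
      subst hone
      rw [hS1, card_blk (by omega)]
      omega
    · rcases le_or_gt i τ with hiτ | hiτ
      · rw [hSmid i h2 hiτ]
        have hdisj : Disjoint (blk (n+1) (d (i-1)) (d i)) (blk (n+1) (v+a) (n+1)) := by
          rw [Finset.disjoint_left]
          intro p hp hp2
          have hq1 := mem_blk.mp hp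
          have hq2 := mem_blk.mp hp2
          have := hdv i hiτ
          omega
        have hdiN : d i ≤ n + 1 := by have := hdv i hiτ; omega
        rw [Finset.card_union_of_disjoint hdisj, card_blk hdiN, card_blk (le_refl _)]
        have h5 := hdsucc i h2
        have h6 := hci i h2 hiτ
        have h7 := hdv i hiτ
        have h8 := hdv (i-1) (by omega)
        omega
      · rw [hSgt i hiτ]
        have h9 := hQb i hiτ hi.2
        rw [card_blk (by omega)]
        omega
  · intro q H
    have hpol : ∀ i, 1 ≤ i → i ≤ s → ∀ x ∈ Submodule.span ℂ (f i '' (S i : Set (Fin (n+1)))),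
        ∀ y ∈ Submodule.span ℂ (f i '' (S i : Set (Fin (n+1)))),
        polar ⇑q x y = 0 := by
      intro i h1 h2 x hx y hy
      have h0 := H i (Finset.mem_Icc.mpr ⟨h1, h2⟩)
      have hxy := h0 (x + y) (add_mem hx hy)
      have hx0 := h0 x hx
      have hy0 := h0 y hy
      simp [polar, hxy, hx0, hy0]
    have hmem : ∀ i, ∀ p ∈ S i, f i p ∈ Submodule.span ℂ (f i '' (S i : Set (Fin (n+1)))) :=
      fun i p hp => Submodule.subset_span ⟨p, Finset.mem_coe.mpr hp, rfl⟩
    have hmemE1 : ∀ p : ℕ, p < v + a →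
        EE (n+1) p ∈ Submodule.span ℂ (f 1 '' (S 1 : Set (Fin (n+1)))) := by
      intro p hp
      have hpN : p < n + 1 := by omega
      have h := hmem 1 ⟨p, hpN⟩ (by rw [hS1]; exact mem_blk.mpr ⟨Nat.zero_le _, hp⟩)
      have hfeq : f 1 ⟨p, hpN⟩ = EE (n+1) p := by rw [hfEE 1 (by omega) (by omega)]
      rwa [hfeq] at h
    have hZ1 : ∀ p p' : ℕ, p < v + a → p' < v + a →
        polar ⇑q (EE (n+1) p) (EE (n+1) p') = 0 := by
      intro p p' hp hp'
      exact hpol 1 le_rfl (by omega) _ (hmemE1 p hp) _ (hmemE1 p' hp')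
    have hmemBgen : ∀ i, 2 ≤ i → i ≤ τ → i ≠ 3 → i ≠ 4 → ∀ p : ℕ, v + a ≤ p → (h2 : p < n + 1) →
        EE (n+1) p ∈ Submodule.span ℂ (f i '' (S i : Set (Fin (n+1)))) := by
      intro i h2 hiτ h3 h4 p hp1 hp2
      have h := hmem i ⟨p, hp2⟩ (by
        rw [hSmid i h2 hiτ]
        exact Finset.mem_union.mpr (Or.inr (mem_blk.mpr ⟨hp1, hp2⟩)))
      have hfeq : f i ⟨p, hp2⟩ = EE (n+1) p := by rw [hfEE i h3 h4]
      rwa [hfeq] at h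
    have hZ2 : ∀ p p' : ℕ, v + a ≤ p → p < n+1 → v + a ≤ p' → p' < n+1 →
        polar ⇑q (EE (n+1) p) (EE (n+1) p') = 0 := by
      intro p p' h1 h2 h3 h4
      exact hpol 2 (by omega) (by omega) _ (hmemBgen 2 le_rfl (by omega) (by omega) (by omega) p h1 h2)
        _ (hmemBgen 2 le_rfl (by omega) (by omega) (by omega) p' h3 h4)
    have hmemR : ∀ i, 2 ≤ i → i ≤ τ → ∀ p : ℕ, d (i-1) ≤ p → p < d i →
        EE (n+1) p ∈ Submodule.span ℂ (f i '' (S i : Set (Fin (n+1)))) := by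
      intro i h2 hiτ p hplo hphi
      have hpv : p < v := by have := hdv i hiτ; omega
      have hpN : p < n + 1 := by omega
      have hmem' := hmem i ⟨p, hpN⟩ (by
        rw [hSmid i h2 hiτ]
        exact Finset.mem_union.mpr (Or.inl (mem_blk.mpr ⟨hplo, hphi⟩)))
      by_cases h3 : i = 3
      · subst h3
        have hfeq : f 3 ⟨p, hpN⟩ = EE (n+1) p := by
          rw [hf3]
          exact GG_eq_of_neg (by show ¬(v + a ≤ p ∧ p < v + a + a); omega)
        rwa [hfeq] at hmem'
      · by_cases h4 : i = 4
        · subst h4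
          have hfeq : f 4 ⟨p, hpN⟩ = EE (n+1) p := by
            rw [hf4]
            exact GG_eq_of_neg (by show ¬(v + a + 1 ≤ p ∧ p < v + a + 1 + a); omega)
          rwa [hfeq] at hmem'
        · have hfeq : f i ⟨p, hpN⟩ = EE (n+1) p := by rw [hfEE i h3 h4]
          rwa [hfeq] at hmem'
    have hmemG3 : ∀ (p : ℕ) (h1 : v + a ≤ p) (hN : p < n + 1),
        f 3 ⟨p, hN⟩ ∈ Submodule.span ℂ (f 3 '' (S 3 : Set (Fin (n+1)))) := by
      intro p h1 hN
      exact hmem 3 ⟨p, hN⟩ (by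
        rw [hSmid 3 (by omega) (by omega)]
        exact Finset.mem_union.mpr (Or.inr (mem_blk.mpr ⟨h1, hN⟩)))
    have hmemG4 : ∀ (p : ℕ) (h1 : v + a ≤ p) (hN : p < n + 1),
        f 4 ⟨p, hN⟩ ∈ Submodule.span ℂ (f 4 '' (S 4 : Set (Fin (n+1)))) := by
      intro p h1 hN
      exact hmem 4 ⟨p, hN⟩ (by
        rw [hSmid 4 (by omega) (by omega)]
        exact Finset.mem_union.mpr (Or.inr (mem_blk.mpr ⟨h1, hN⟩)))
    have hG3pos : ∀ (p : ℕ) (hN : p < n+1), v + a ≤ p → p < v + a + a →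
        f 3 ⟨p, hN⟩ = EE (n+1) p + EE (n+1) (p - a) := by
      intro p hN h1 h2
      rw [hf3]
      exact GG_eq_of_pos ⟨h1, h2⟩
    have hG3neg : ∀ (p : ℕ) (hN : p < n+1), ¬(v + a ≤ p ∧ p < v + a + a) →
        f 3 ⟨p, hN⟩ = EE (n+1) p := by
      intro p hN h1
      rw [hf3]
      exact GG_eq_of_neg h1
    have hG4pos : ∀ (p : ℕ) (hN : p < n+1), v + a + 1 ≤ p → p < v + a + 1 + a →
        f 4 ⟨p, hN⟩ = EE (n+1) p + EE (n+1) (p - (a+1)) := by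
      intro p hN h1 h2
      rw [hf4]
      exact GG_eq_of_pos ⟨h1, h2⟩
    have hG4neg : ∀ (p : ℕ) (hN : p < n+1), ¬(v + a + 1 ≤ p ∧ p < v + a + 1 + a) →
        f 4 ⟨p, hN⟩ = EE (n+1) p := by
      intro p hN h1
      rw [hf4]
      exact GG_eq_of_neg h1
    have hZ3 : ∀ p p' : ℕ, p < v → v + a ≤ p' → p' < n + 1 →
        polar ⇑q (EE (n+1) p) (EE (n+1) p') = 0 := by
      intro p p' hpv hp1 hp2
      obtain ⟨i, h2, hiτ, hplo, hphi⟩ := locate d τ (by omega) hdmono hd1 p (by rwa [hdτ])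
      have hx := hmemR i h2 hiτ p hplo hphi
      by_cases h3 : i = 3
      · subst h3
        by_cases hcase : p' < v + a + a
        · have h0 := hpol 3 (by omega) (by omega) _ hx _ (hmemG3 p' hp1 hp2)
          rw [hG3pos p' hp2 hp1 hcase, polar_add_right,
            hZ1 p (p' - a) (by omega) (by omega), add_zero] at h0
          exact h0
        · have h0 := hpol 3 (by omega) (by omega) _ hx _ (hmemG3 p' hp1 hp2)
          rw [hG3neg p' hp2 (by omega)] at h0
          exact h0
      · by_cases h4 : i = 4
        · subst h4
          by_cases hcase : v + a + 1 ≤ p' ∧ p' < v + a + 1 + a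
          · have h0 := hpol 4 (by omega) (by omega) _ hx _ (hmemG4 p' hp1 hp2)
            rw [hG4pos p' hp2 hcase.1 hcase.2, polar_add_right,
              hZ1 p (p' - (a+1)) (by omega) (by omega), add_zero] at h0
            exact h0
          · have h0 := hpol 4 (by omega) (by omega) _ hx _ (hmemG4 p' hp1 hp2)
            rw [hG4neg p' hp2 hcase] at h0
            exact h0
        · exact hpol i (by omega) (by omega) _ hx _
            (hmemBgen i h2 hiτ h3 h4 p' hp1 hp2)
    have hC3 : ∀ k < b, ∀ l < b,
        (if l < a then polar ⇑q (EE (n+1) (v+l)) (EE (n+1) (v+a+k)) else 0)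
        + (if k < a then polar ⇑q (EE (n+1) (v+k)) (EE (n+1) (v+a+l)) else 0) = 0 := by
      intro k hk l hl
      have hkN : v + a + k < n + 1 := by omega
      have hlN : v + a + l < n + 1 := by omega
      have h0 := hpol 3 (by omega) (by omega) _ (hmemG3 (v+a+k) (by omega) hkN)
        _ (hmemG3 (v+a+l) (by omega) hlN)
      by_cases hka : k < a <;> by_cases hla : l < a
      · rw [hG3pos _ hkN (by omega) (by omega), hG3pos _ hlN (by omega) (by omega),
          show v+a+k - a = v+k by omega, show v+a+l - a = v+l by omega,
          polar_add_left, polar_add_right, polar_add_right,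
          hZ2 _ _ (by omega) hkN (by omega) hlN,
          hZ1 (v+k) (v+l) (by omega) (by omega),
          polar_comm (⇑q) (EE (n+1) (v+a+k)) (EE (n+1) (v+l))] at h0
        rw [if_pos hla, if_pos hka]
        linear_combination h0
      · rw [hG3pos _ hkN (by omega) (by omega), show v+a+k - a = v+k by omega,
          hG3neg _ hlN (by omega), polar_add_left,
          hZ2 _ _ (by omega) hkN (by omega) hlN] at h0
        rw [if_neg hla, if_pos hka]
        linear_combination h0
      · rw [hG3neg _ hkN (by omega), hG3pos _ hlN (by omega) (by omega),
          show v+a+l - a = v+l by omega, polar_add_right,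
          hZ2 _ _ (by omega) hkN (by omega) hlN,
          polar_comm (⇑q) (EE (n+1) (v+a+k)) (EE (n+1) (v+l))] at h0
        rw [if_pos hla, if_neg hka]
        linear_combination h0
      · rw [if_neg hla, if_neg hka]
        norm_num
    have hC4 : ∀ k < b, ∀ l < b,
        (if 1 ≤ l ∧ l ≤ a then polar ⇑q (EE (n+1) (v+(l-1))) (EE (n+1) (v+a+k)) else 0)
        + (if 1 ≤ k ∧ k ≤ a then polar ⇑q (EE (n+1) (v+(k-1))) (EE (n+1) (v+a+l)) else 0) = 0 := by
      intro k hk l hl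
      have hkN : v + a + k < n + 1 := by omega
      have hlN : v + a + l < n + 1 := by omega
      have h0 := hpol 4 (by omega) (by omega) _ (hmemG4 (v+a+k) (by omega) hkN)
        _ (hmemG4 (v+a+l) (by omega) hlN)
      by_cases hka : 1 ≤ k ∧ k ≤ a <;> by_cases hla : 1 ≤ l ∧ l ≤ a
      · rw [hG4pos _ hkN (by omega) (by omega), hG4pos _ hlN (by omega) (by omega),
          show v+a+k - (a+1) = v+(k-1) by omega, show v+a+l - (a+1) = v+(l-1) by omega,
          polar_add_left, polar_add_right, polar_add_right,
          hZ2 _ _ (by omega) hkN (by omega) hlN,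
          hZ1 (v+(k-1)) (v+(l-1)) (by omega) (by omega),
          polar_comm (⇑q) (EE (n+1) (v+a+k)) (EE (n+1) (v+(l-1)))] at h0
        rw [if_pos hla, if_pos hka]
        linear_combination h0
      · rw [hG4pos _ hkN (by omega) (by omega), show v+a+k - (a+1) = v+(k-1) by omega,
          hG4neg _ hlN (by omega), polar_add_left,
          hZ2 _ _ (by omega) hkN (by omega) hlN] at h0
        rw [if_neg hla, if_pos hka]
        linear_combination h0
      · rw [hG4neg _ hkN (by omega), hG4pos _ hlN (by omega) (by omega),
          show v+a+l - (a+1) = v+(l-1) by omega, polar_add_right,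
          hZ2 _ _ (by omega) hkN (by omega) hlN,
          polar_comm (⇑q) (EE (n+1) (v+a+k)) (EE (n+1) (v+(l-1)))] at h0
        rw [if_pos hla, if_neg hka]
        linear_combination h0
      · rw [if_neg hla, if_neg hka]
        norm_num
    have hM := Mzero a b hab
      (fun i j => polar ⇑q (EE (n+1) (v+i)) (EE (n+1) (v+a+j))) hC3 hC4
    have hall : ∀ pp qq : Fin (n+1), polar ⇑q (Pi.single pp (1:ℂ)) (Pi.single qq 1) = 0 := by
      intro pp qq
      rw [← EE_coe, ← EE_coe]
      have hp := pp.isLt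
      have hq := qq.isLt
      rcases lt_or_ge (pp:ℕ) (v+a) with h1 | h1 <;> rcases lt_or_ge (qq:ℕ) (v+a) with h2 | h2
      · exact hZ1 _ _ h1 h2
      · rcases lt_or_ge (pp:ℕ) v with h3 | h3
        · exact hZ3 _ _ h3 h2 hq
        · have hmm : polar ⇑q (EE (n+1) (v + ((pp:ℕ) - v)))
              (EE (n+1) (v + a + ((qq:ℕ) - (v+a)))) = 0 :=
            hM ((pp:ℕ) - v) (by omega) ((qq:ℕ) - (v+a)) (by omega)
          rw [show v + ((pp:ℕ) - v) = (pp:ℕ) by omega,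
            show v+a+((qq:ℕ)-(v+a)) = (qq:ℕ) by omega] at hmm
          exact hmm
      · rw [polar_comm]
        rcases lt_or_ge (qq:ℕ) v with h3 | h3
        · exact hZ3 _ _ h3 h1 hp
        · have hmm : polar ⇑q (EE (n+1) (v + ((qq:ℕ) - v)))
              (EE (n+1) (v + a + ((pp:ℕ) - (v+a)))) = 0 :=
            hM ((qq:ℕ) - v) (by omega) ((pp:ℕ) - (v+a)) (by omega)
          rw [show v + ((qq:ℕ) - v) = (qq:ℕ) by omega,
            show v+a+((pp:ℕ)-(v+a)) = (pp:ℕ) by omega] at hmm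
          exact hmm
      · exact hZ2 _ _ h1 hp h2 hq
    have hB : polarBilin q = 0 := by
      refine (Pi.basisFun ℂ (Fin (n+1))).ext fun i => ?_
      refine (Pi.basisFun ℂ (Fin (n+1))).ext fun j => ?_
      simp only [Pi.basisFun_apply, polarBilin_apply_apply, LinearMap.zero_apply]
      exact hall i j
    ext x
    have h2x : polar ⇑q x x = 0 := by
      have hcf := LinearMap.congr_fun (LinearMap.congr_fun hB x) x
      simpa [polarBilin_apply_apply] using hcf
    have h4 : q (x + x) = 4 * q x := by
      rw [show x + x = (2:ℂ) • x from (two_smul ℂ x).symm, QuadraticMap.map_smul,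
        smul_eq_mul]
      ring
    have h5 : polar ⇑q x x = 2 * q x := by
      rw [polar, h4]; ring
    rw [h5] at h2x
    have hqx : q x = 0 := by
      rcases mul_eq_zero.mp h2x with h | h
      · norm_num at h
      · exact h
    simpa using hqx
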